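/- (Lemma 4) The composition of polyphase anchoring with global subsampled attention is general shift-equivariant: fix s, H, W, d, d_k, d_v ≥ 1, a query matrix W_q : Matrix (Fin d) (Fin d_k) ℝ, matrix-valued kernels Φ_K : G → Matrix (Fin d) (Fin d_k) ℝ and Φ_V : G → Matrix (Fin d) (Fin d_v) ℝ (G = ZMod (s·H) × ZMod (s·W)), and X : G → EuclideanSpace ℝ (Fin d) whose polyphase norms have a unique maximizer. Then for every (u,v) ∈ G there exists (u',v') ∈ G such that A_g(P(shift_{(u,v)} X)) = shift_{(u',v')} (A_g(P X)). -/

import Mathlib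

open Matrix
noncomputable section
/-- Circular shift of a 2D signal `X : ZMod M × ZMod N → α` by `(u,v)`:
`(shift_{(u,v)} X)(i,j) = X (i-u, j-v)`. -/
def cshift2 {M N : ℕ} {α : Type*} (uv : ZMod M × ZMod N)
    (X : ZMod M × ZMod N → α) : ZMod M × ZMod N → α :=
  fun ij => X (ij.1 - uv.1, ij.2 - uv.2)
/-- Softmax of a score vector over a finite index type:
`softmax a i = exp (a i) / ∑ j, exp (a j)`. -/
def softmax {ι : Type*} [Fintype ι] (a : ι → ℝ) : ι → ℝ :=
  fun i => Real.exp (a i) / ∑ j, Real.exp (a j)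
/-- The group homomorphism `ι_s : ZMod H → ZMod (s·H)`, `k ↦ s·k`. -/
def iotaS (s : ℕ) {H : ℕ} (k : ZMod H) : ZMod (s * H) :=
  (s : ZMod (s * H)) * ((k.val : ℕ) : ZMod (s * H))
/-- Residue of a grid point of `ZMod (s·H) × ZMod (s·W)` modulo `s` in each coordinate. -/
def resPh (s : ℕ) {H W : ℕ} (ij : ZMod (s * H) × ZMod (s * W)) : ZMod s × ZMod s :=
  (ZMod.castHom (dvd_mul_right s H) (ZMod s) ij.1,
   ZMod.castHom (dvd_mul_right s W) (ZMod s) ij.2)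

/-- Polyphase norm `N_{pq}(X) = ∑ over grid points with residue `(p,q)` of `‖X(i,j)‖²`. -/
def polyNorm (s : ℕ) {H W C : ℕ} [NeZero (s * H)] [NeZero (s * W)]
    (X : ZMod (s * H) × ZMod (s * W) → EuclideanSpace ℝ (Fin C))
    (pq : ZMod s × ZMod s) : ℝ :=
  ∑ ij : ZMod (s * H) × ZMod (s * W), if resPh s ij = pq then ‖X ij‖ ^ 2 else 0

/-- The polyphase norms of `X` have a (unique) strict maximizer over `ZMod s × ZMod s`. -/
def HasUniqueMaxPhase (s : ℕ) {H W C : ℕ} [NeZero (s * H)] [NeZero (s * W)]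
    (X : ZMod (s * H) × ZMod (s * W) → EuclideanSpace ℝ (Fin C)) : Prop :=
  ∃ pq : ZMod s × ZMod s, ∀ pq' : ZMod s × ZMod s, pq' ≠ pq →
    polyNorm s X pq' < polyNorm s X pq

open Classical in
/-- The maximizing phase `(p̂,q̂)`, cast into the big grid via canonical representatives. -/
def anchorPhase (s : ℕ) {H W C : ℕ} [NeZero (s * H)] [NeZero (s * W)]
    (X : ZMod (s * H) × ZMod (s * W) → EuclideanSpace ℝ (Fin C)) :
    ZMod (s * H) × ZMod (s * W) :=
  if h : HasUniqueMaxPhase s X then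
    (((h.choose.1.val : ℕ) : ZMod (s * H)), ((h.choose.2.val : ℕ) : ZMod (s * W)))
  else (0, 0)

/-- Polyphase anchoring operator: `P X = shift_{(-p̂',-q̂')} X`, circularly shifting `X`
so that its maximizing polyphase aligns with the anchors. -/
def polyAnchor (s : ℕ) {H W C : ℕ} [NeZero (s * H)] [NeZero (s * W)]
    (X : ZMod (s * H) × ZMod (s * W) → EuclideanSpace ℝ (Fin C)) :
    ZMod (s * H) × ZMod (s * W) → EuclideanSpace ℝ (Fin C) :=
  cshift2 (-(anchorPhase s X).1, -(anchorPhase s X).2) X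
/-- Stride-`s` subsampled keys/values: `K_s(k,l) = ∑_{(a,b)} (Φ(a,b))ᵀ X(ι_s k + a, ι_s l + b)`. -/
def subsample (s : ℕ) {H W d m : ℕ} [NeZero (s * H)] [NeZero (s * W)]
    (Φ : ZMod (s * H) × ZMod (s * W) → Matrix (Fin d) (Fin m) ℝ)
    (X : ZMod (s * H) × ZMod (s * W) → (Fin d → ℝ)) :
    ZMod H × ZMod W → (Fin m → ℝ) :=
  fun kl => ∑ ab : ZMod (s * H) × ZMod (s * W),
    (Φ ab).transpose.mulVec (X (iotaS s kl.1 + ab.1, iotaS s kl.2 + ab.2))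

/-- Global subsampled attention (GSA): attention of each query against the stride-`s`
subsampled keys and values, with softmax over `ZMod H × ZMod W`. -/
def gsAttn (s : ℕ) {H W d dk dv : ℕ}
    [NeZero (s * H)] [NeZero (s * W)] [NeZero H] [NeZero W]
    (Wq : Matrix (Fin d) (Fin dk) ℝ)
    (ΦK : ZMod (s * H) × ZMod (s * W) → Matrix (Fin d) (Fin dk) ℝ)
    (ΦV : ZMod (s * H) × ZMod (s * W) → Matrix (Fin d) (Fin dv) ℝ)
    (X : ZMod (s * H) × ZMod (s * W) → (Fin d → ℝ)) :
    ZMod (s * H) × ZMod (s * W) → (Fin dv → ℝ) :=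
  fun ij => ∑ kl : ZMod H × ZMod W,
    softmax (fun kl' => Wq.transpose.mulVec (X ij) ⬝ᵥ subsample s ΦK X kl') kl
      • subsample s ΦV X kl


/-! ### Auxiliary lemmas -/

section AuxLemmas

lemma smul_natCast_mod (s H n : ℕ) :
    (s : ZMod (s * H)) * ((n % H : ℕ) : ZMod (s * H)) = (s : ZMod (s * H)) * (n : ℕ) := by
  conv_rhs => rw [← Nat.mod_add_div n H]
  push_cast
  rw [mul_add, ← mul_assoc, ← Nat.cast_mul s H, ZMod.natCast_self, zero_mul, add_zero]

lemma iotaS_add (s : ℕ) {H : ℕ} [NeZero H] (a b : ZMod H) :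
    iotaS s (a + b) = iotaS s a + iotaS s b := by
  unfold iotaS
  rw [ZMod.val_add, smul_natCast_mod]
  push_cast
  ring

lemma iotaS_sub (s : ℕ) {H : ℕ} [NeZero H] (a b : ZMod H) :
    iotaS s (a - b) = iotaS s a - iotaS s b := by
  have := iotaS_add s (a - b) b
  rw [sub_add_cancel] at this
  rw [this]; ring

lemma iotaS_surj_ker (s H : ℕ) [NeZero H] [NeZero (s * H)] (t : ZMod (s * H))
    (ht : ZMod.castHom (dvd_mul_right s H) (ZMod s) t = 0) :
    ∃ k : ZMod H, iotaS s k = t := by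
  rw [ZMod.castHom_apply, ZMod.cast_eq_val, ZMod.natCast_eq_zero_iff] at ht
  obtain ⟨m, hm⟩ := ht
  refine ⟨(m : ZMod H), ?_⟩
  unfold iotaS
  rw [ZMod.val_natCast, smul_natCast_mod, ← Nat.cast_mul, ← hm]
  simp [ZMod.natCast_val, ZMod.cast_id]

lemma resPh_sub (s : ℕ) {H W : ℕ} (a b : ZMod (s * H) × ZMod (s * W)) :
    resPh s (a - b) = resPh s a - resPh s b := by
  simp [resPh, Prod.ext_iff, map_sub]

lemma polyNorm_cshift2 (s : ℕ) {H W C : ℕ} [NeZero (s * H)] [NeZero (s * W)]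
    (X : ZMod (s * H) × ZMod (s * W) → EuclideanSpace ℝ (Fin C))
    (uv : ZMod (s * H) × ZMod (s * W)) (pq : ZMod s × ZMod s) :
    polyNorm s (cshift2 uv X) pq = polyNorm s X (pq - resPh s uv) := by
  unfold polyNorm cshift2
  refine Fintype.sum_equiv (Equiv.subRight uv) _ _ (fun ij => ?_)
  have h1 : (Equiv.subRight uv ij) = ij - uv := rfl
  have h2 : (ij.1 - uv.1, ij.2 - uv.2) = ij - uv := rfl
  rw [h1, h2, resPh_sub]
  congr 1
  simp [sub_left_inj]

lemma hasUniqueMax_choose_eq (s : ℕ) {H W C : ℕ} [NeZero (s * H)] [NeZero (s * W)]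
    {X : ZMod (s * H) × ZMod (s * W) → EuclideanSpace ℝ (Fin C)}
    (hX : HasUniqueMaxPhase s X) (m : ZMod s × ZMod s)
    (hm : ∀ pq' : ZMod s × ZMod s, pq' ≠ m → polyNorm s X pq' < polyNorm s X m) :
    hX.choose = m := by
  by_contra hne
  exact lt_asymm (hm _ hne) (hX.choose_spec m (fun h => hne h.symm))

lemma hasUniqueMax_cshift2 (s : ℕ) {H W C : ℕ} [NeZero (s * H)] [NeZero (s * W)]
    {X : ZMod (s * H) × ZMod (s * W) → EuclideanSpace ℝ (Fin C)}
    (hX : HasUniqueMaxPhase s X) (uv : ZMod (s * H) × ZMod (s * W)) :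
    ∀ pq' : ZMod s × ZMod s, pq' ≠ hX.choose + resPh s uv →
      polyNorm s (cshift2 uv X) pq' < polyNorm s (cshift2 uv X) (hX.choose + resPh s uv) := by
  intro pq' hne
  rw [polyNorm_cshift2, polyNorm_cshift2, add_sub_cancel_right]
  exact hX.choose_spec _ (fun h => hne (by rw [← h, sub_add_cancel]))

lemma anchorPhase_cshift2 (s : ℕ) {H W C : ℕ} [NeZero (s * H)] [NeZero (s * W)]
    {X : ZMod (s * H) × ZMod (s * W) → EuclideanSpace ℝ (Fin C)}
    (hX : HasUniqueMaxPhase s X) (uv : ZMod (s * H) × ZMod (s * W)) :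
    anchorPhase s (cshift2 uv X) =
      ((((hX.choose.1 + (resPh s uv).1 : ZMod s).val : ℕ) : ZMod (s * H)),
       (((hX.choose.2 + (resPh s uv).2 : ZMod s).val : ℕ) : ZMod (s * W))) := by
  classical
  have h' : HasUniqueMaxPhase s (cshift2 uv X) :=
    ⟨hX.choose + resPh s uv, hasUniqueMax_cshift2 s hX uv⟩
  have hch : h'.choose = hX.choose + resPh s uv :=
    hasUniqueMax_choose_eq s h' _ (hasUniqueMax_cshift2 s hX uv)
  rw [anchorPhase, dif_pos h', hch]
  rfl

lemma anchorPhase_self (s : ℕ) {H W C : ℕ} [NeZero (s * H)] [NeZero (s * W)]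
    {X : ZMod (s * H) × ZMod (s * W) → EuclideanSpace ℝ (Fin C)}
    (hX : HasUniqueMaxPhase s X) :
    anchorPhase s X = (((hX.choose.1.val : ℕ) : ZMod (s * H)),
      ((hX.choose.2.val : ℕ) : ZMod (s * W))) := by
  classical
  rw [anchorPhase, dif_pos hX]

lemma natCast_val_zmod (s : ℕ) [NeZero s] (x : ZMod s) : ((x.val : ℕ) : ZMod s) = x := by
  simp [ZMod.natCast_val, ZMod.cast_id]

lemma polyAnchor_cshift2 (s : ℕ) {H W C : ℕ} [NeZero s] [NeZero (s * H)] [NeZero (s * W)]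
    {X : ZMod (s * H) × ZMod (s * W) → EuclideanSpace ℝ (Fin C)}
    (hX : HasUniqueMaxPhase s X) (uv : ZMod (s * H) × ZMod (s * W)) :
    ∃ w : ZMod (s * H) × ZMod (s * W),
      ZMod.castHom (dvd_mul_right s H) (ZMod s) w.1 = 0 ∧
      ZMod.castHom (dvd_mul_right s W) (ZMod s) w.2 = 0 ∧
      polyAnchor s (cshift2 uv X) = cshift2 w (polyAnchor s X) := by
  refine ⟨(uv.1 + (anchorPhase s X).1 - (anchorPhase s (cshift2 uv X)).1,
           uv.2 + (anchorPhase s X).2 - (anchorPhase s (cshift2 uv X)).2), ?_, ?_, ?_⟩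
  · dsimp only
    rw [anchorPhase_cshift2 s hX uv, anchorPhase_self s hX]
    simp only [map_sub, map_add, map_natCast]
    rw [natCast_val_zmod, natCast_val_zmod]
    simp only [resPh]
    ring
  · dsimp only
    rw [anchorPhase_cshift2 s hX uv, anchorPhase_self s hX]
    simp only [map_sub, map_add, map_natCast]
    rw [natCast_val_zmod, natCast_val_zmod]
    simp only [resPh]
    ring
  · funext ij
    simp only [polyAnchor, cshift2]
    refine congrArg X (Prod.ext ?_ ?_) <;> dsimp only <;> ring

lemma softmax_comp_equiv {ι κ : Type*} [Fintype ι] [Fintype κ] (e : κ ≃ ι) (f : ι → ℝ)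
    (k : κ) : softmax (fun j => f (e j)) k = softmax f (e k) := by
  unfold softmax
  rw [Equiv.sum_comp e (fun i => Real.exp (f i))]

lemma subsample_cshift2 (s : ℕ) {H W d m : ℕ} [NeZero H] [NeZero W]
    [NeZero (s * H)] [NeZero (s * W)]
    (Φ : ZMod (s * H) × ZMod (s * W) → Matrix (Fin d) (Fin m) ℝ)
    (Y : ZMod (s * H) × ZMod (s * W) → (Fin d → ℝ)) (a : ZMod H) (b : ZMod W)
    (kl : ZMod H × ZMod W) :
    subsample s Φ (cshift2 (iotaS s a, iotaS s b) Y) kl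
      = subsample s Φ Y (kl.1 - a, kl.2 - b) := by
  unfold subsample cshift2
  refine Finset.sum_congr rfl (fun ab _ => ?_)
  rw [iotaS_sub, iotaS_sub]
  congr 2 <;> ring

lemma gsAttn_cshift2 (s : ℕ) {H W d dk dv : ℕ}
    [NeZero (s * H)] [NeZero (s * W)] [NeZero H] [NeZero W]
    (Wq : Matrix (Fin d) (Fin dk) ℝ)
    (ΦK : ZMod (s * H) × ZMod (s * W) → Matrix (Fin d) (Fin dk) ℝ)
    (ΦV : ZMod (s * H) × ZMod (s * W) → Matrix (Fin d) (Fin dv) ℝ)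
    (Y : ZMod (s * H) × ZMod (s * W) → (Fin d → ℝ)) (a : ZMod H) (b : ZMod W) :
    gsAttn s Wq ΦK ΦV (cshift2 (iotaS s a, iotaS s b) Y)
      = cshift2 (iotaS s a, iotaS s b) (gsAttn s Wq ΦK ΦV Y) := by
  funext ij
  set e : (ZMod H × ZMod W) ≃ (ZMod H × ZMod W) :=
    Equiv.prodCongr (Equiv.subRight a) (Equiv.subRight b) with he
  have hsub : ∀ (m : ℕ) (Φ : ZMod (s * H) × ZMod (s * W) → Matrix (Fin d) (Fin m) ℝ)
      (kl : ZMod H × ZMod W),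
      subsample s Φ (cshift2 (iotaS s a, iotaS s b) Y) kl = subsample s Φ Y (e kl) :=
    fun m Φ kl => subsample_cshift2 s Φ Y a b kl
  have hq : cshift2 (iotaS s a, iotaS s b) Y ij = Y (ij.1 - iotaS s a, ij.2 - iotaS s b) := rfl
  show _ = gsAttn s Wq ΦK ΦV Y (ij.1 - iotaS s a, ij.2 - iotaS s b)
  unfold gsAttn
  simp only [hsub, hq]
  exact Fintype.sum_equiv e _ _ (fun kl => by
    rw [softmax_comp_equiv e
      (fun kl' => Wq.transpose.mulVec (Y (ij.1 - iotaS s a, ij.2 - iotaS s b)) ⬝ᵥ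
        subsample s ΦK Y kl') kl])

end AuxLemmas

/-- (Lemma 4) The composition of polyphase anchoring with global subsampled attention is
general shift-equivariant: `A_g (P (shift_{(u,v)} X)) = shift_{(u',v')} (A_g (P X))`
for some shift `(u',v')`. -/
theorem polyAnchor_gsAttn_general_shift_equivariant
    (s H W d dk dv : ℕ) [NeZero s] [NeZero H] [NeZero W]
    (hs : 1 ≤ s) (hH : 1 ≤ H) (hW : 1 ≤ W) (hd : 1 ≤ d) (hdk : 1 ≤ dk) (hdv : 1 ≤ dv)
    (Wq : Matrix (Fin d) (Fin dk) ℝ)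
    (ΦK : ZMod (s * H) × ZMod (s * W) → Matrix (Fin d) (Fin dk) ℝ)
    (ΦV : ZMod (s * H) × ZMod (s * W) → Matrix (Fin d) (Fin dv) ℝ)
    (X : ZMod (s * H) × ZMod (s * W) → EuclideanSpace ℝ (Fin d))
    (hX : HasUniqueMaxPhase s X)
    (uv : ZMod (s * H) × ZMod (s * W)) :
    ∃ u'v' : ZMod (s * H) × ZMod (s * W),
      gsAttn s Wq ΦK ΦV (fun ij => WithLp.ofLp (polyAnchor s (cshift2 uv X) ij)) =
        cshift2 u'v' (gsAttn s Wq ΦK ΦV (fun ij => WithLp.ofLp (polyAnchor s X ij))) := by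
  obtain ⟨w, hw1, hw2, hPeq⟩ := polyAnchor_cshift2 s hX uv
  obtain ⟨a, ha⟩ := iotaS_surj_ker s H w.1 hw1
  obtain ⟨b, hb⟩ := iotaS_surj_ker s W w.2 hw2
  refine ⟨(iotaS s a, iotaS s b), ?_⟩
  have hw : (iotaS s a, iotaS s b) = w := by rw [ha, hb]
  rw [hPeq, ← hw]
  exact gsAttn_cshift2 s Wq ΦK ΦV (fun ij => WithLp.ofLp (polyAnchor s X ij)) a b
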